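/- Let L be a line arrangement (over any field) having at least two modular points of multiplicity 2. Then L is a near pencil. -/

import Mathlib

open Projectivization

/-- The projective plane over `K`, with points (and, dually, lines) given by
projectivizing `K^3`. -/
abbrev PP (K : Type*) [Field K] := Projectivization K (Fin 3 → K)

/-- Incidence: the point `p` lies on the line `l` (given by dual coordinates):
the dot product of (any) homogeneous coordinates vanishes. -/
def incid {K : Type*} [Field K] (p l : PP K) : Prop :=
  dotProduct p.rep l.rep = 0

/-- The multiplicity of a point `p` with respect to a line arrangement `L`:
the number of lines of `L` passing through `p`. -/
noncomputable def mult {K : Type*} [Field K] (L : Set (PP K)) (p : PP K) : ℕ :=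
  {l ∈ L | incid p l}.ncard

/-- `p` is a crossing point of the arrangement `L`. -/
def crossing {K : Type*} [Field K] (L : Set (PP K)) (p : PP K) : Prop :=
  2 ≤ mult L p

/-- `p` is a modular point of `L`: a crossing point such that for every other
crossing point `q`, some line of `L` passes through both `p` and `q`. -/
def modular {K : Type*} [Field K] (L : Set (PP K)) (p : PP K) : Prop :=
  crossing L p ∧ ∀ q, crossing L q → q ≠ p → ∃ l ∈ L, incid p l ∧ incid q l

/-- `t_k`: the number of crossing points of `L` of multiplicity exactly `k`. -/
noncomputable def tk {K : Type*} [Field K] (L : Set (PP K)) (k : ℕ) : ℕ :=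
  {p | mult L p = k}.ncard

/-- A pencil: all lines pass through one common point. -/
def isPencil {K : Type*} [Field K] (L : Set (PP K)) : Prop :=
  ∃ p, ∀ l ∈ L, incid p l

/-- A near pencil: an arrangement of `s ≥ 3` lines, exactly `s - 1` of which
are concurrent. -/
def isNearPencil {K : Type*} [Field K] (L : Set (PP K)) : Prop :=
  3 ≤ L.ncard ∧ ∃ p, {l ∈ L | incid p l}.ncard + 1 = L.ncard

section Aux

variable {K : Type*} [Field K]

/-- Dot product with a fixed vector, as a linear functional. -/
def dotFun (u : Fin 3 → K) : Module.Dual K (Fin 3 → K) where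
  toFun v := dotProduct u v
  map_add' x y := by simp [dotProduct_add]
  map_smul' c x := by simp [dotProduct_smul]

/-- `dotFun` as a linear map into the dual. -/
def dotMap : (Fin 3 → K) →ₗ[K] Module.Dual K (Fin 3 → K) where
  toFun := dotFun
  map_add' u v := by ext w; simp [dotFun, add_dotProduct]
  map_smul' c u := by ext w; simp [dotFun, smul_dotProduct]

lemma dotMap_ker : LinearMap.ker (dotMap (K := K)) = ⊥ := by
  rw [LinearMap.ker_eq_bot']
  intro u hu
  funext i
  have h2 : dotProduct u (Pi.single i 1) = 0 := by
    have h := congrArg (fun f => f (Pi.single i 1)) hu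
    exact h
  rw [dotProduct_single, mul_one] at h2
  exact h2

lemma vec_unique {u w x y : Fin 3 → K} (hx : x ≠ 0) (hy : y ≠ 0)
    (hind : LinearIndependent K ![u, w])
    (hxu : dotProduct x u = 0) (hxw : dotProduct x w = 0)
    (hyu : dotProduct y u = 0) (hyw : dotProduct y w = 0) :
    ∃ c : K, c ≠ 0 ∧ c • y = x := by
  have hind' : LinearIndependent K ![dotMap u, dotMap w] := by
    have h := hind.map' dotMap dotMap_ker
    have he : (dotMap (K := K)) ∘ ![u, w] = ![dotMap u, dotMap w] := by
      funext i; fin_cases i <;> rfl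
    rwa [he] at h
  set W : Submodule K (Module.Dual K (Fin 3 → K)) :=
    Submodule.span K (Set.range ![dotMap u, dotMap w]) with hW
  have hWrank : Module.finrank K W = 2 := by
    rw [finrank_span_eq_card hind']
    simp
  have hsum := Subspace.finrank_add_finrank_dualCoannihilator_eq W
  have h3 : Module.finrank K (Fin 3 → K) = 3 := by simp
  have hcoann : Module.finrank K W.dualCoannihilator = 1 := by omega
  have hmem : ∀ v : Fin 3 → K, dotProduct v u = 0 → dotProduct v w = 0 →
      v ∈ W.dualCoannihilator := by
    intro v hvu hvw
    rw [Submodule.mem_dualCoannihilator]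
    intro φ hφ
    induction hφ using Submodule.span_induction with
    | mem f hf =>
        obtain ⟨i, rfl⟩ := hf
        fin_cases i
        · show dotFun u v = 0
          simpa [dotFun, dotProduct_comm] using hvu
        · show dotFun w v = 0
          simpa [dotFun, dotProduct_comm] using hvw
    | zero => simp
    | add f g _ _ hf hg => simp [hf, hg]
    | smul c f _ hf => simp [hf]
  have hxm := hmem x hxu hxw
  have hym := hmem y hyu hyw
  have hnind : ¬ LinearIndependent K ![y, x] := by
    intro hxy
    have h1 : Submodule.span K (Set.range ![y, x]) ≤ W.dualCoannihilator := by
      rw [Submodule.span_le]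
      rintro v ⟨i, rfl⟩
      fin_cases i
      · exact hym
      · exact hxm
    have h2 : Module.finrank K (Submodule.span K (Set.range ![y, x])) = 2 := by
      rw [finrank_span_eq_card hxy]; simp
    have := Submodule.finrank_mono h1
    omega
  rw [LinearIndependent.pair_iff' hy] at hnind
  push_neg at hnind
  obtain ⟨a, ha⟩ := hnind
  exact ⟨a, fun h => hx (by rw [← ha, h, zero_smul]), ha⟩

lemma incid_comm {a b : PP K} (h : incid a b) : incid b a := by
  unfold incid at *
  rwa [dotProduct_comm]

lemma incid_unique {l₁ l₂ x y : PP K} (h : l₁ ≠ l₂)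
    (h1 : incid x l₁) (h2 : incid x l₂) (h3 : incid y l₁) (h4 : incid y l₂) : x = y := by
  have hind : LinearIndependent K ![l₁.rep, l₂.rep] := by
    have hi := (independent_pair_iff_ne l₁ l₂).mpr h
    rw [independent_iff] at hi
    have he : Projectivization.rep ∘ ![l₁, l₂] = ![l₁.rep, l₂.rep] := by
      funext i; fin_cases i <;> rfl
    rwa [he] at hi
  obtain ⟨c, hc0, hc⟩ := vec_unique x.rep_nonzero y.rep_nonzero hind h1 h2 h3 h4
  rw [← x.mk_rep, ← y.mk_rep, mk_eq_mk_iff]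
  exact ⟨Units.mk0 c hc0, hc⟩

lemma exists_incid (l₁ l₂ : PP K) : ∃ x : PP K, incid x l₁ ∧ incid x l₂ := by
  set g : (Fin 3 → K) →ₗ[K] K × K := (dotFun l₁.rep).prod (dotFun l₂.rep) with hg
  have hni : ¬ Function.Injective g := by
    intro hinj
    have hle := LinearMap.finrank_le_finrank_of_injective hinj
    rw [Module.finrank_fin_fun, Module.finrank_prod, Module.finrank_self] at hle
    omega
  rw [Function.not_injective_iff] at hni
  obtain ⟨v1, v2, he, hne⟩ := hni
  have hv : v1 - v2 ≠ 0 := sub_ne_zero.mpr hne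
  have hz : g (v1 - v2) = 0 := by rw [map_sub, he, sub_self]
  have hz1 : dotProduct l₁.rep (v1 - v2) = 0 := congrArg Prod.fst hz
  have hz2 : dotProduct l₂.rep (v1 - v2) = 0 := congrArg Prod.snd hz
  refine ⟨mk K (v1 - v2) hv, ?_, ?_⟩ <;>
  · show dotProduct (mk K (v1 - v2) hv).rep _ = 0
    obtain ⟨c, hc⟩ := exists_smul_eq_mk_rep K (v1 - v2) hv
    rw [← hc, smul_dotProduct, dotProduct_comm]
    first
      | (rw [hz1]; simp)
      | (rw [hz2]; simp)

lemma pair_of_ncard_two {α : Type*} {s : Set α} (h : s.ncard = 2) {c : α} (hc : c ∈ s) :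
    ∃ a, a ≠ c ∧ s = {c, a} := by
  obtain ⟨x, y, hxy, rfl⟩ := Set.ncard_eq_two.mp h
  simp only [Set.mem_insert_iff, Set.mem_singleton_iff] at hc
  rcases hc with rfl | rfl
  · exact ⟨y, hxy.symm, rfl⟩
  · exact ⟨x, hxy, Set.pair_comm x c⟩

lemma crossing_of_two {L : Set (PP K)} (hfin : L.Finite) {m₁ m₂ x : PP K}
    (h1 : m₁ ∈ L) (h2 : m₂ ∈ L) (hne : m₁ ≠ m₂) (hi1 : incid x m₁) (hi2 : incid x m₂) :
    crossing L x := by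
  have hsub : ({m₁, m₂} : Set (PP K)) ⊆ {l ∈ L | incid x l} := by
    intro t ht
    simp only [Set.mem_insert_iff, Set.mem_singleton_iff] at ht
    rcases ht with rfl | rfl
    · exact ⟨h1, hi1⟩
    · exact ⟨h2, hi2⟩
  have := Set.ncard_le_ncard hsub (hfin.subset (Set.sep_subset _ _))
  rw [Set.ncard_pair hne] at this
  exact this

end Aux

/-- if L has at least two modular points of multiplicity 2, then L
is a near pencil. -/
theorem near_pencil_of_two_double_modular_points {K : Type*} [Field K] (L : Set (PP K))
    (hfin : L.Finite) (hs : 2 ≤ L.ncard) (p q : PP K) (hpq : p ≠ q)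
    (hp : modular L p) (hpm : mult L p = 2)
    (hq : modular L q) (hqm : mult L q = 2) :
    isNearPencil L := by
  obtain ⟨hpc, hpmod⟩ := hp
  obtain ⟨hqc, hqmod⟩ := hq
  obtain ⟨l, hlL, hql, hpl⟩ := hqmod p hpc hpq
  obtain ⟨a, halne, hPa⟩ := pair_of_ncard_two hpm (⟨hlL, hpl⟩ : l ∈ {m ∈ L | incid p m})
  obtain ⟨b, hblne, hQb⟩ := pair_of_ncard_two hqm (⟨hlL, hql⟩ : l ∈ {m ∈ L | incid q m})
  have haP : a ∈ {m ∈ L | incid p m} := by rw [hPa]; simp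
  have hbQ : b ∈ {m ∈ L | incid q m} := by rw [hQb]; simp
  obtain ⟨haL, hpa⟩ := haP
  obtain ⟨hbL, hqb⟩ := hbQ
  have hab : a ≠ b := by
    rintro rfl
    exact halne (incid_unique hpq (incid_comm hpl) (incid_comm hql)
      (incid_comm hpa) (incid_comm hqb)).symm
  obtain ⟨r, hra, hrb⟩ := exists_incid a b
  have hpr : p ≠ r := by
    rintro rfl
    have : b ∈ {m ∈ L | incid p m} := ⟨hbL, hrb⟩
    rw [hPa] at this
    simp only [Set.mem_insert_iff, Set.mem_singleton_iff] at this
    rcases this with rfl | rfl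
    · exact hblne rfl
    · exact hab rfl
  have hqr : q ≠ r := by
    rintro rfl
    have : a ∈ {m ∈ L | incid q m} := ⟨haL, hra⟩
    rw [hQb] at this
    simp only [Set.mem_insert_iff, Set.mem_singleton_iff] at this
    rcases this with rfl | rfl
    · exact halne rfl
    · exact hab rfl
  have hmain : ∀ m ∈ L, m ≠ l → incid r m := by
    intro m hmL hml
    by_cases hma : m = a
    · rwa [hma]
    by_cases hmb : m = b
    · rwa [hmb]
    obtain ⟨x, hxm, hxa⟩ := exists_incid m a
    have hxc : crossing L x := crossing_of_two hfin hmL haL hma hxm hxa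
    have hxp : x ≠ p := by
      rintro rfl
      have : m ∈ {n ∈ L | incid x n} := ⟨hmL, hxm⟩
      rw [hPa] at this
      simp only [Set.mem_insert_iff, Set.mem_singleton_iff] at this
      rcases this with rfl | rfl
      · exact hml rfl
      · exact hma rfl
    have hxq : x ≠ q := by
      rintro rfl
      have : a ∈ {n ∈ L | incid x n} := ⟨haL, hxa⟩
      rw [hQb] at this
      simp only [Set.mem_insert_iff, Set.mem_singleton_iff] at this
      rcases this with rfl | rfl
      · exact halne rfl
      · exact hab rfl
    obtain ⟨n, hnL, hqn, hxn⟩ := hqmod x hxc hxq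
    have hn : n ∈ {m ∈ L | incid q m} := ⟨hnL, hqn⟩
    rw [hQb] at hn
    simp only [Set.mem_insert_iff, Set.mem_singleton_iff] at hn
    rcases hn with rfl | rfl
    · exact absurd (incid_unique (Ne.symm halne) hxn hxa hpl hpa) hxp
    · have hxr : x = r := incid_unique hab hxa hxn hra hrb
      rwa [hxr] at hxm
  have hnl : ¬ incid r l := by
    intro h
    exact halne (incid_unique hpr (incid_comm hpl) (incid_comm h)
      (incid_comm hpa) (incid_comm hra)).symm
  have hset : {m ∈ L | incid r m} = L \ {l} := by
    ext m
    constructor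
    · rintro ⟨hm, hi⟩
      refine ⟨hm, ?_⟩
      rintro rfl
      exact hnl hi
    · rintro ⟨hm, hne⟩
      exact ⟨hm, hmain m hm hne⟩
  have h3 : 3 ≤ L.ncard := by
    have hsub : ({l, a, b} : Set (PP K)) ⊆ L := by
      intro t ht
      simp only [Set.mem_insert_iff, Set.mem_singleton_iff] at ht
      rcases ht with rfl | rfl | rfl <;> assumption
    have hcard : ({l, a, b} : Set (PP K)).ncard = 3 :=
      Set.ncard_eq_three.mpr ⟨l, a, b, Ne.symm halne, Ne.symm hblne, hab, rfl⟩
    have := Set.ncard_le_ncard hsub hfin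
    omega
  refine ⟨h3, r, ?_⟩
  rw [hset]
  exact Set.ncard_diff_singleton_add_one hlL hfin
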